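/- The identity $\frac{\partial L_n}{\partial x} = -\frac{n}{2 f (x-y_0)} \, \partial_{y_0}^{\,n-1}\!\left(\frac{f}{x-y_0}\right)$ holds for all $n \ge 1$, where $f(y_0)=(y_0(y_0-1)(y_0-x))^{-1/2}$, $L_n = f^{(n)}/f$, and the $x$-derivative is taken with $y_0$ held fixed. -/

import Mathlib

open Finset

/-- `Σ_k = (-y)^{-k} + (1-y)^{-k} + (x-y)^{-k}`. -/
noncomputable def Sig (x y : ℂ) (k : ℕ) : ℂ :=
  ((-y) ^ k)⁻¹ + ((1 - y) ^ k)⁻¹ + ((x - y) ^ k)⁻¹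

/-- The Bell-type polynomial
`L_n = ∑_{p_1+2p_2+⋯+np_n=n} n! Σ_1^{p_1}⋯Σ_n^{p_n} / (2^{∑ p_k} ∏ p_k! ∏ k^{p_k})`,
the sum running over all nonnegative multi-indices `(p_1,…,p_n)` with
`p_1 + 2p_2 + ⋯ + n p_n = n` (encoded as `p : Fin n → ℕ`). -/
noncomputable def Lsum (x y : ℂ) (n : ℕ) : ℂ :=
  ∑ p ∈ (Fintype.piFinset fun _ : Fin n => Finset.range (n + 1)).filter
      (fun p => ∑ i : Fin n, (i.1 + 1) * p i = n),
    (n.factorial : ℂ) * (∏ i : Fin n, Sig x y (i.1 + 1) ^ p i) /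
      (2 ^ (∑ i : Fin n, p i) * (∏ i : Fin n, ((p i).factorial : ℂ)) *
        ∏ i : Fin n, ((i.1 : ℂ) + 1) ^ p i)


noncomputable def core (S : ℕ → ℂ) (n : ℕ) : ℂ :=
  ∑ p ∈ (Fintype.piFinset fun _ : Fin n => Finset.range (n + 1)).filter
      (fun p => ∑ i : Fin n, (i.1 + 1) * p i = n),
    (∏ i : Fin n, S (i.1 + 1) ^ p i) /
      (2 ^ (∑ i : Fin n, p i) * (∏ i : Fin n, ((p i).factorial : ℂ)) *
        ∏ i : Fin n, ((i.1 : ℂ) + 1) ^ p i)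

noncomputable def TT (S : ℕ → ℂ) (n : ℕ) (P : ℕ → ℕ) : ℂ := ∏ j ∈ Finset.range n, S (j+1) ^ P j

noncomputable def DD (n : ℕ) (P : ℕ → ℕ) : ℂ :=
  2 ^ (∑ j ∈ Finset.range n, P j) * (∏ j ∈ Finset.range n, ((P j).factorial : ℂ)) *
    ∏ j ∈ Finset.range n, ((j : ℂ) + 1) ^ P j

noncomputable def Nset (n : ℕ) : Finset (ℕ → ℕ) :=
  letI := Classical.decEq (ℕ → ℕ)
  ((Fintype.piFinset fun _ : Fin n => Finset.range (n + 1)).filter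
      (fun p => ∑ i : Fin n, (i.1 + 1) * p i = n)).image
    (fun p j => if h : j < n then p ⟨j, h⟩ else 0)

lemma mem_Nset {n : ℕ} {P : ℕ → ℕ} :
    P ∈ Nset n ↔ (∀ j, n ≤ j → P j = 0) ∧ ∑ j ∈ Finset.range n, (j+1) * P j = n := by
  classical
  constructor
  · rintro hP
    rw [Nset] at hP
    simp only [Finset.mem_image, Finset.mem_filter] at hP
    obtain ⟨p, ⟨hp1, hp2⟩, rfl⟩ := hP
    constructor
    · intro j hj; simp [Nat.not_lt.2 hj]
    · rw [← Fin.sum_univ_eq_sum_range (fun j => (j+1) * if h : j < n then p ⟨j, h⟩ else 0) n]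
      calc (∑ i : Fin n, (i.1 + 1) * if h : i.1 < n then p ⟨i.1, h⟩ else 0)
          = ∑ i : Fin n, (i.1 + 1) * p i := Finset.sum_congr rfl fun i _ => by simp [i.2]
        _ = n := hp2
  · rintro ⟨h0, hs⟩
    rw [Nset]
    simp only [Finset.mem_image, Finset.mem_filter]
    refine ⟨fun i => P i.1, ⟨?_, ?_⟩, ?_⟩
    · rw [Fintype.mem_piFinset]
      intro i
      rw [Finset.mem_range, Nat.lt_succ_iff]
      calc P i.1 ≤ (i.1 + 1) * P i.1 := Nat.le_mul_of_pos_left _ (Nat.succ_pos _)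
        _ ≤ ∑ j ∈ Finset.range n, (j+1) * P j :=
            Finset.single_le_sum (f := fun j => (j+1) * P j) (fun j _ => Nat.zero_le _)
              (Finset.mem_range.2 i.2)
        _ = n := hs
    · rw [Fin.sum_univ_eq_sum_range (fun j => (j+1) * P j) n]; exact hs
    · funext j
      by_cases h : j < n
      · simp [h]
      · simp [h, h0 j (Nat.not_lt.1 h)]

lemma core_eq (S : ℕ → ℂ) (n : ℕ) :
    core S n = ∑ P ∈ Nset n, TT S n P / DD n P := by
  classical
  rw [Nset, core, Finset.sum_image]
  · refine Finset.sum_congr rfl fun p hp => ?_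
    have hT : (∏ i : Fin n, S (i.1 + 1) ^ p i)
        = TT S n (fun j => if h : j < n then p ⟨j, h⟩ else 0) := by
      rw [TT, ← Fin.prod_univ_eq_prod_range (fun j => S (j+1) ^ if h : j < n then p ⟨j, h⟩ else 0) n]
      exact Finset.prod_congr rfl fun i _ => by simp [i.2]
    have hD : (2 ^ (∑ i : Fin n, p i) * (∏ i : Fin n, ((p i).factorial : ℂ)) *
        ∏ i : Fin n, ((i.1 : ℂ) + 1) ^ p i)
        = DD n (fun j => if h : j < n then p ⟨j, h⟩ else 0) := by
      have e1 : (∑ j ∈ Finset.range n, if h : j < n then p ⟨j, h⟩ else 0)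
          = ∑ i : Fin n, p i := by
        rw [← Fin.sum_univ_eq_sum_range (fun j => if h : j < n then p ⟨j, h⟩ else 0) n]
        exact Finset.sum_congr rfl fun i _ => by simp [i.2]
      have e2 : (∏ j ∈ Finset.range n,
            (((if h : j < n then p ⟨j, h⟩ else 0) : ℕ).factorial : ℂ))
          = ∏ i : Fin n, ((p i).factorial : ℂ) := by
        rw [← Fin.prod_univ_eq_prod_range
          (fun j => (((if h : j < n then p ⟨j, h⟩ else 0) : ℕ).factorial : ℂ)) n]
        exact Finset.prod_congr rfl fun i _ => by simp [i.2]
      have e3 : (∏ j ∈ Finset.range n, ((j : ℂ) + 1) ^ (if h : j < n then p ⟨j, h⟩ else 0))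
          = ∏ i : Fin n, ((i.1 : ℂ) + 1) ^ p i := by
        rw [← Fin.prod_univ_eq_prod_range
          (fun j => ((j : ℂ) + 1) ^ (if h : j < n then p ⟨j, h⟩ else 0)) n]
        exact Finset.prod_congr rfl fun i _ => by simp [i.2]
      rw [DD, e1, e2, e3]
    rw [hT, hD]
  · intro p _ q _ h
    funext i
    have := congrFun h i.1
    simpa [i.2] using this

lemma TT_stable (S : ℕ → ℂ) {m n : ℕ} (hmn : m ≤ n) (P : ℕ → ℕ)
    (h : ∀ j, m ≤ j → P j = 0) : TT S n P = TT S m P :=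
  (Finset.prod_subset (Finset.range_subset_range.2 hmn) fun j _ hj => by
    rw [h j (Nat.le_of_not_lt fun hc => hj (Finset.mem_range.2 hc)), pow_zero]).symm

lemma DD_stable {m n : ℕ} (hmn : m ≤ n) (P : ℕ → ℕ)
    (h : ∀ j, m ≤ j → P j = 0) : DD n P = DD m P := by
  have hm : ∀ j ∈ Finset.range n, j ∉ Finset.range m → P j = 0 := fun j _ hj =>
    h j (Nat.le_of_not_lt fun hc => hj (Finset.mem_range.2 hc))
  rw [DD, DD]
  rw [(Finset.sum_subset (Finset.range_subset_range.2 hmn) fun j hj hj' => hm j hj hj').symm,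
    (Finset.prod_subset (Finset.range_subset_range.2 hmn) fun j hj hj' => by
      rw [hm j hj hj']; simp).symm,
    (Finset.prod_subset (Finset.range_subset_range.2 hmn) fun j hj hj' => by
      rw [hm j hj hj']; simp).symm]

lemma DD_ne_zero (n : ℕ) (P : ℕ → ℕ) : DD n P ≠ 0 := by
  rw [DD]
  refine mul_ne_zero (mul_ne_zero ?_ ?_) ?_
  · exact pow_ne_zero _ two_ne_zero
  · exact Finset.prod_ne_zero_iff.2 fun j _ => Nat.cast_ne_zero.2 (Nat.factorial_ne_zero _)
  · exact Finset.prod_ne_zero_iff.2 fun j _ => pow_ne_zero _ (Nat.cast_add_one_ne_zero j)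

lemma removed_support {n i : ℕ} {P : ℕ → ℕ} (hin : i < n) (hPi : P i ≠ 0)
    (h0 : ∀ j, n ≤ j → P j = 0) (hs : ∑ j ∈ Finset.range n, (j+1) * P j = n) :
    ∀ j, n - 1 - i ≤ j → (P j - if j = i then 1 else 0) = 0 := by
  have hbound : ∀ j, j < n → (j+1) * P j ≤ n := fun j hj => hs ▸
    Finset.single_le_sum (f := fun j => (j+1) * P j) (fun j _ => Nat.zero_le _)
      (Finset.mem_range.2 hj)
  intro j hj
  by_cases hjn : n ≤ j
  · rw [h0 j hjn]; simp
  · push_neg at hjn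
    by_cases hji : j = i
    · subst hji
      have h2 : ¬ 2 ≤ P j := by
        intro h2
        have hb := hbound j hjn
        have h3 : (j+1) * 2 ≤ (j+1) * P j := Nat.mul_le_mul_left _ h2
        obtain ⟨a, ha⟩ : ∃ a, (j+1) * P j = a := ⟨_, rfl⟩
        rw [ha] at hb h3
        omega
      rw [if_pos rfl]
      omega
    · have hP1 : 1 ≤ P i := Nat.one_le_iff_ne_zero.2 hPi
      have hpair : (i+1) * P i + (j+1) * P j ≤ n := by
        have hsub : ({i, j} : Finset ℕ) ⊆ Finset.range n := by
          intro a ha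
          simp only [Finset.mem_insert, Finset.mem_singleton] at ha
          rcases ha with rfl | rfl <;> exact Finset.mem_range.2 (by omega)
        calc (i+1) * P i + (j+1) * P j
            = ∑ a ∈ ({i, j} : Finset ℕ), (a+1) * P a := by
              rw [Finset.sum_pair (Ne.symm hji)]
          _ ≤ ∑ a ∈ Finset.range n, (a+1) * P a :=
              Finset.sum_le_sum_of_subset hsub
          _ = n := hs
      rw [if_neg hji]
      by_contra hPj
      have hPj1 : 1 ≤ P j := Nat.one_le_iff_ne_zero.2 hPj
      have e1 : i + 1 ≤ (i+1) * P i := Nat.le_mul_of_pos_right _ hP1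
      have e2 : j + 1 ≤ (j+1) * P j := Nat.le_mul_of_pos_right _ hPj1
      obtain ⟨a, ha⟩ : ∃ a, (i+1) * P i = a := ⟨_, rfl⟩
      obtain ⟨b, hb⟩ : ∃ b, (j+1) * P j = b := ⟨_, rfl⟩
      rw [ha] at e1 hpair
      rw [hb] at e2 hpair
      omega

lemma key (S w : ℕ → ℂ) (n : ℕ) :
    ∑ P ∈ Nset n, ∑ i ∈ Finset.range n,
      w i * (P i) * ((i : ℂ) + 1) * S (i+1) ^ (P i - 1) *
        (∏ j ∈ (Finset.range n).erase i, S (j+1) ^ P j) / DD n P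
    = ∑ s ∈ Finset.range n, w s / 2 * core S (n - 1 - s) := by
  classical
  have hrhs : ∀ s ∈ Finset.range n, w s / 2 * core S (n - 1 - s)
      = ∑ Q ∈ Nset (n - 1 - s), w s / 2 * (TT S (n-1-s) Q / DD (n-1-s) Q) := by
    intro s _; rw [core_eq, Finset.mul_sum]
  rw [Finset.sum_congr rfl hrhs]
  have hlhs : ∀ P ∈ Nset n,
      (∑ i ∈ Finset.range n,
        w i * (P i) * ((i : ℂ) + 1) * S (i+1) ^ (P i - 1) *
          (∏ j ∈ (Finset.range n).erase i, S (j+1) ^ P j) / DD n P)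
      = ∑ i ∈ (Finset.range n).filter (fun i => P i ≠ 0),
        w i * (P i) * ((i : ℂ) + 1) * S (i+1) ^ (P i - 1) *
          (∏ j ∈ (Finset.range n).erase i, S (j+1) ^ P j) / DD n P := by
    intro P _
    refine (Finset.sum_filter_of_ne ?_).symm
    intro i _ hne h0
    exact hne (by simp [h0])
  rw [Finset.sum_congr rfl hlhs, Finset.sum_sigma', Finset.sum_sigma']
  refine Finset.sum_nbij'
    (fun z => ⟨z.2, fun j => z.1 j - if j = z.2 then 1 else 0⟩)
    (fun z => ⟨fun j => z.2 j + if j = z.1 then 1 else 0, z.1⟩)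
    ?_ ?_ ?_ ?_ ?_
  · -- maps into
    rintro ⟨P, i⟩ hz
    rw [Finset.mem_sigma, Finset.mem_filter, Finset.mem_range] at hz
    dsimp only at hz ⊢
    obtain ⟨hP, hin, hPi⟩ := hz
    obtain ⟨h0, hs⟩ := mem_Nset.1 hP
    have F1 := removed_support hin hPi h0 hs
    have F2 : ∑ j ∈ Finset.range (n - 1 - i), (j+1) * (P j - if j = i then 1 else 0)
        = n - 1 - i := by
      have hQsum : (∑ j ∈ Finset.range n, (j+1) * (P j - if j = i then 1 else 0)) + (i+1)
          = ∑ j ∈ Finset.range n, (j+1) * P j := by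
        rw [← Finset.add_sum_erase _ (fun j => (j+1) * (P j - if j = i then 1 else 0))
            (Finset.mem_range.2 hin),
          ← Finset.add_sum_erase _ (fun j => (j+1) * P j) (Finset.mem_range.2 hin)]
        have herase : ∑ j ∈ (Finset.range n).erase i, (j+1) * (P j - if j = i then 1 else 0)
            = ∑ j ∈ (Finset.range n).erase i, (j+1) * P j :=
          Finset.sum_congr rfl fun j hj => by
            simp [(Finset.mem_erase.1 hj).1]
        rw [herase]
        obtain ⟨k, hk⟩ := Nat.exists_eq_succ_of_ne_zero hPi
        rw [hk, if_pos rfl, show k.succ - 1 = k from rfl, Nat.mul_succ]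
        ring
      have hrestr : ∑ j ∈ Finset.range n, (j+1) * (P j - if j = i then 1 else 0)
          = ∑ j ∈ Finset.range (n - 1 - i), (j+1) * (P j - if j = i then 1 else 0) :=
        (Finset.sum_subset (Finset.range_subset_range.2 (by omega)) fun j hj hj' => by
          rw [F1 j (Nat.le_of_not_lt fun hc => hj' (Finset.mem_range.2 hc)), Nat.mul_zero]).symm
      rw [hs] at hQsum
      omega
    rw [Finset.mem_sigma]
    exact ⟨Finset.mem_range.2 hin, mem_Nset.2 ⟨F1, F2⟩⟩
  · -- reverse maps into
    rintro ⟨s, Q⟩ hz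
    rw [Finset.mem_sigma] at hz
    dsimp only at hz ⊢
    obtain ⟨hsn, hQ⟩ := hz
    rw [Finset.mem_range] at hsn
    obtain ⟨hQ0, hQs⟩ := mem_Nset.1 hQ
    rw [Finset.mem_sigma, Finset.mem_filter]
    dsimp only
    refine ⟨mem_Nset.2 ⟨?_, ?_⟩, ?_, ?_⟩
    · intro j hj
      rw [hQ0 j (by omega), if_neg (by omega)]
    · have hsum : ∑ j ∈ Finset.range n, (j+1) * (Q j + if j = s then 1 else 0)
          = (∑ j ∈ Finset.range n, (j+1) * Q j) + (s+1) := by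
        rw [← Finset.add_sum_erase _ (fun j => (j+1) * (Q j + if j = s then 1 else 0))
            (Finset.mem_range.2 hsn),
          ← Finset.add_sum_erase _ (fun j => (j+1) * Q j) (Finset.mem_range.2 hsn)]
        have herase : ∑ j ∈ (Finset.range n).erase s, (j+1) * (Q j + if j = s then 1 else 0)
            = ∑ j ∈ (Finset.range n).erase s, (j+1) * Q j :=
          Finset.sum_congr rfl fun j hj => by
            simp [(Finset.mem_erase.1 hj).1]
        rw [herase, if_pos rfl]
        ring
      have hrestr : ∑ j ∈ Finset.range n, (j+1) * Q j
          = ∑ j ∈ Finset.range (n - 1 - s), (j+1) * Q j :=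
        (Finset.sum_subset (Finset.range_subset_range.2 (by omega)) fun j hj hj' => by
          rw [hQ0 j (Nat.le_of_not_lt fun hc => hj' (Finset.mem_range.2 hc)), Nat.mul_zero]).symm
      rw [hsum, hrestr, hQs]
      omega
    · exact Finset.mem_range.2 hsn
    · simp
  · -- left inverse
    rintro ⟨P, i⟩ hz
    rw [Finset.mem_sigma, Finset.mem_filter] at hz
    dsimp only at hz ⊢
    obtain ⟨_, _, hPi⟩ := hz
    have hfun : (fun j => (P j - if j = i then 1 else 0) + if j = i then 1 else 0) = P := by
      funext j
      by_cases hji : j = i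
      · subst hji; rw [if_pos rfl]; omega
      · simp [hji]
    exact Sigma.ext hfun (heq_of_eq (by rw [hfun]))
  · -- right inverse
    rintro ⟨s, Q⟩ _
    dsimp only
    have hfun : (fun j => (Q j + if j = s then 1 else 0) - if j = s then 1 else 0) = Q := by
      funext j
      by_cases hjs : j = s <;> simp [hjs]
    exact Sigma.ext rfl (heq_of_eq hfun)
  · -- term equality
    rintro ⟨P, i⟩ hz
    rw [Finset.mem_sigma, Finset.mem_filter, Finset.mem_range] at hz
    dsimp only at hz ⊢
    obtain ⟨hP, hin, hPi⟩ := hz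
    obtain ⟨h0, hs⟩ := mem_Nset.1 hP
    set Q : ℕ → ℕ := fun j => P j - if j = i then 1 else 0 with hQdef
    have hsupp : ∀ j, n - 1 - i ≤ j → Q j = 0 := removed_support hin hPi h0 hs
    have hQi : Q i = P i - 1 := by simp [hQdef]
    have hQj : ∀ j, j ≠ i → Q j = P j := fun j hji => by simp [hQdef, hji]
    have hPQ : P i = Q i + 1 := by rw [hQi]; omega
    have hTT : TT S (n-1-i) Q = TT S n Q :=
      (TT_stable S (show n-1-i ≤ n by omega) Q hsupp).symm
    have hDD2 : DD (n-1-i) Q = DD n Q :=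
      (DD_stable (show n-1-i ≤ n by omega) Q hsupp).symm
    have hTQ : TT S n Q
        = S (i+1) ^ (P i - 1) * ∏ j ∈ (Finset.range n).erase i, S (j+1) ^ P j := by
      rw [TT, ← Finset.mul_prod_erase (Finset.range n) (fun j => S (j+1) ^ Q j)
        (Finset.mem_range.2 hin), hQi]
      congr 1
      exact Finset.prod_congr rfl fun j hj => by rw [hQj j (Finset.mem_erase.1 hj).1]
    have hDP : DD n P = 2 * (P i : ℂ) * ((i:ℂ)+1) * DD n Q := by
      rw [DD, DD]
      have e1 : ∑ j ∈ Finset.range n, P j = (∑ j ∈ Finset.range n, Q j) + 1 := by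
        rw [← Finset.add_sum_erase _ P (Finset.mem_range.2 hin),
          ← Finset.add_sum_erase _ Q (Finset.mem_range.2 hin)]
        have he : ∑ j ∈ (Finset.range n).erase i, P j
            = ∑ j ∈ (Finset.range n).erase i, Q j :=
          Finset.sum_congr rfl fun j hj => (hQj j (Finset.mem_erase.1 hj).1).symm
        rw [he]
        omega
      have e2 : ∏ j ∈ Finset.range n, ((P j).factorial : ℂ)
          = (P i : ℂ) * ∏ j ∈ Finset.range n, ((Q j).factorial : ℂ) := by
        rw [← Finset.mul_prod_erase (Finset.range n) (fun j => ((P j).factorial : ℂ))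
            (Finset.mem_range.2 hin),
          ← Finset.mul_prod_erase (Finset.range n) (fun j => ((Q j).factorial : ℂ))
            (Finset.mem_range.2 hin)]
        have he : ∏ j ∈ (Finset.range n).erase i, ((P j).factorial : ℂ)
            = ∏ j ∈ (Finset.range n).erase i, ((Q j).factorial : ℂ) :=
          Finset.prod_congr rfl fun j hj => by rw [hQj j (Finset.mem_erase.1 hj).1]
        rw [he, show (P i).factorial = P i * (Q i).factorial from by
          rw [hPQ]; exact Nat.factorial_succ _]
        push_cast
        ring
      have e3 : ∏ j ∈ Finset.range n, ((j:ℂ)+1) ^ P j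
          = ((i:ℂ)+1) * ∏ j ∈ Finset.range n, ((j:ℂ)+1) ^ Q j := by
        rw [← Finset.mul_prod_erase (Finset.range n) (fun j => ((j:ℂ)+1) ^ P j)
            (Finset.mem_range.2 hin),
          ← Finset.mul_prod_erase (Finset.range n) (fun j => ((j:ℂ)+1) ^ Q j)
            (Finset.mem_range.2 hin)]
        have he : ∏ j ∈ (Finset.range n).erase i, ((j:ℂ)+1) ^ P j
            = ∏ j ∈ (Finset.range n).erase i, ((j:ℂ)+1) ^ Q j :=
          Finset.prod_congr rfl fun j hj => by rw [hQj j (Finset.mem_erase.1 hj).1]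
        rw [he, hPQ, pow_succ]
        ring
      rw [e1, e2, e3, pow_succ]
      ring
    rw [hTT, hDD2, hTQ, hDP]
    have hc : (P i : ℂ) ≠ 0 := Nat.cast_ne_zero.2 hPi
    have hd : ((i:ℂ)+1) ≠ 0 := Nat.cast_add_one_ne_zero i
    have hD : DD n Q ≠ 0 := DD_ne_zero n Q
    field_simp

lemma core_zero (S : ℕ → ℂ) : core S 0 = 1 := by
  rw [core_eq]
  have h1 : Nset 0 = {fun _ => 0} := by
    apply Finset.eq_singleton_iff_unique_mem.2
    constructor
    · exact mem_Nset.2 ⟨fun j _ => rfl, by simp⟩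
    · intro P hP
      obtain ⟨h0, _⟩ := mem_Nset.1 hP
      funext j
      exact h0 j (Nat.zero_le j)
  rw [h1, Finset.sum_singleton, TT, DD]
  simp

lemma core_rec (S : ℕ → ℂ) (n : ℕ) :
    (n : ℂ) * core S n = ∑ s ∈ Finset.range n, S (s+1) / 2 * core S (n - 1 - s) := by
  rw [← key S (fun s => S (s+1)) n]
  rw [core_eq, Finset.mul_sum]
  refine Finset.sum_congr rfl fun P hP => ?_
  obtain ⟨h0, hs⟩ := mem_Nset.1 hP
  have hterm : ∀ i ∈ Finset.range n,
      S (i+1) * ((P i : ℂ)) * ((i:ℂ)+1) * S (i+1) ^ (P i - 1) *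
        (∏ j ∈ (Finset.range n).erase i, S (j+1) ^ P j)
      = (((i+1) * P i : ℕ) : ℂ) * TT S n P := by
    intro i hi
    rcases Nat.eq_zero_or_pos (P i) with h|h
    · simp [h]
    · obtain ⟨k, hk⟩ := Nat.exists_eq_succ_of_ne_zero (Nat.pos_iff_ne_zero.1 h)
      rw [TT, ← Finset.mul_prod_erase (Finset.range n) (fun j => S (j+1) ^ P j) hi, hk,
        show k.succ - 1 = k from rfl, pow_succ]
      push_cast
      ring
  calc (n : ℂ) * (TT S n P / DD n P)
      = (((∑ i ∈ Finset.range n, (i+1) * P i : ℕ)) : ℂ) * TT S n P / DD n P := by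
        rw [hs, mul_div_assoc]
    _ = ∑ i ∈ Finset.range n,
          S (i+1) * ((P i : ℂ)) * ((i:ℂ)+1) * S (i+1) ^ (P i - 1) *
            (∏ j ∈ (Finset.range n).erase i, S (j+1) ^ P j) / DD n P := by
        rw [← Finset.sum_div]
        congr 1
        rw [Nat.cast_sum, Finset.sum_mul]
        exact (Finset.sum_congr rfl hterm).symm

lemma iter_inv (c : ℂ) (m : ℕ) : ∀ y : ℂ, y ≠ c →
    iteratedDeriv m (fun z => (c - z)⁻¹) y = (m.factorial : ℂ) * ((c - y) ^ (m+1))⁻¹ := by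
  induction m with
  | zero => intro y hy; simp
  | succ m ih =>
    intro y hy
    rw [iteratedDeriv_succ]
    have hev : iteratedDeriv m (fun z => (c - z)⁻¹) =ᶠ[nhds y]
        fun z => (m.factorial : ℂ) * ((c - z) ^ (m+1))⁻¹ := by
      filter_upwards [isOpen_compl_singleton.mem_nhds (by simpa using hy)] with z hz
      exact ih z hz
    rw [hev.deriv_eq]
    have hcy : c - y ≠ 0 := sub_ne_zero.2 (Ne.symm hy)
    have h1 : HasDerivAt (fun z : ℂ => c - z) (-1) y := by
      simpa using (hasDerivAt_id y).const_sub c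
    have h2 : HasDerivAt (fun z : ℂ => (c - z) ^ (m+1))
        (((m:ℂ)+1) * (c - y) ^ m * (-1)) y := by
      have := h1.fun_pow (m+1)
      simpa using this
    have h3 : HasDerivAt (fun z : ℂ => ((c - z) ^ (m+1))⁻¹)
        (-(((m:ℂ)+1) * (c - y) ^ m * (-1)) / ((c - y) ^ (m+1)) ^ 2) y :=
      h2.inv (pow_ne_zero _ hcy)
    have h4 := h3.const_mul (m.factorial : ℂ)
    rw [h4.deriv]
    rw [Nat.factorial_succ]
    push_cast
    field_simp
    ring

lemma sig3_iter (x : ℂ) (m : ℕ) : ∀ y : ℂ, y ≠ 0 → y ≠ 1 → y ≠ x →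
    iteratedDeriv m (fun z => (0 - z)⁻¹ + ((1:ℂ) - z)⁻¹ + (x - z)⁻¹) y
    = (m.factorial : ℂ) *
        (((0 - y) ^ (m+1))⁻¹ + (((1:ℂ) - y) ^ (m+1))⁻¹ + ((x - y) ^ (m+1))⁻¹) := by
  induction m with
  | zero => intro y h0 h1 hx; simp
  | succ m ih =>
    intro y h0 h1 hx
    rw [iteratedDeriv_succ]
    have hopen : IsOpen {z : ℂ | z ≠ 0 ∧ z ≠ 1 ∧ z ≠ x} := by
      have : {z : ℂ | z ≠ 0 ∧ z ≠ 1 ∧ z ≠ x}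
          = ({0}ᶜ : Set ℂ) ∩ (({1}ᶜ : Set ℂ) ∩ ({x}ᶜ : Set ℂ)) := by
        ext z; simp [Set.mem_compl_iff]
      rw [this]
      exact isOpen_compl_singleton.inter (isOpen_compl_singleton.inter isOpen_compl_singleton)
    have hev : iteratedDeriv m (fun z => (0 - z)⁻¹ + ((1:ℂ) - z)⁻¹ + (x - z)⁻¹) =ᶠ[nhds y]
        fun z => (m.factorial : ℂ) *
          (((0 - z) ^ (m+1))⁻¹ + (((1:ℂ) - z) ^ (m+1))⁻¹ + ((x - z) ^ (m+1))⁻¹) := by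
      filter_upwards [hopen.mem_nhds ⟨h0, h1, hx⟩] with z hz
      exact ih z hz.1 hz.2.1 hz.2.2
    rw [hev.deriv_eq]
    have key3 : ∀ c : ℂ, y ≠ c → HasDerivAt (fun z : ℂ => ((c - z) ^ (m+1))⁻¹)
        (((m:ℂ)+1) * ((c - y) ^ (m+2))⁻¹) y := by
      intro c hc
      have hcy : c - y ≠ 0 := sub_ne_zero.2 (Ne.symm hc)
      have h1' : HasDerivAt (fun z : ℂ => c - z) (-1) y := by
        simpa using (hasDerivAt_id y).const_sub c
      have h2 : HasDerivAt (fun z : ℂ => (c - z) ^ (m+1))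
          (((m:ℂ)+1) * (c - y) ^ m * (-1)) y := by simpa using h1'.fun_pow (m+1)
      have h3 := h2.inv (pow_ne_zero _ hcy)
      refine h3.congr_deriv ?_
      field_simp
      ring
    have hD : HasDerivAt (fun z => (m.factorial : ℂ) *
        (((0 - z) ^ (m+1))⁻¹ + (((1:ℂ) - z) ^ (m+1))⁻¹ + ((x - z) ^ (m+1))⁻¹))
        ((m.factorial : ℂ) * (((m:ℂ)+1) * ((0 - y) ^ (m+2))⁻¹
          + ((m:ℂ)+1) * (((1:ℂ) - y) ^ (m+2))⁻¹ + ((m:ℂ)+1) * ((x - y) ^ (m+2))⁻¹)) y :=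
      (((key3 0 h0).add (key3 1 h1)).add (key3 x hx)).const_mul _
    rw [hD.deriv, Nat.factorial_succ]
    push_cast
    ring

lemma an_iter {U : Set ℂ} {g : ℂ → ℂ} (hg : AnalyticOnNhd ℂ g U) (m : ℕ) :
    AnalyticOnNhd ℂ (iteratedDeriv m g) U := by
  rw [iteratedDeriv_eq_iterate]
  exact hg.iterated_deriv m

lemma leibniz {U : Set ℂ} (hU : IsOpen U) {u v : ℂ → ℂ}
    (hu : AnalyticOnNhd ℂ u U) (hv : AnalyticOnNhd ℂ v U) :
    ∀ n, ∀ y ∈ U, iteratedDeriv n (fun z => u z * v z) y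
      = ∑ j ∈ Finset.range (n+1), (n.choose j : ℂ) *
          iteratedDeriv j u y * iteratedDeriv (n-j) v y := by
  intro n
  induction n with
  | zero => intro y hy; simp
  | succ n ih =>
    intro y hy
    rw [iteratedDeriv_succ]
    have hev : iteratedDeriv n (fun z => u z * v z) =ᶠ[nhds y]
        fun z => ∑ j ∈ Finset.range (n+1), (n.choose j : ℂ) *
          iteratedDeriv j u z * iteratedDeriv (n-j) v z := by
      filter_upwards [hU.mem_nhds hy] with z hz
      exact ih z hz
    rw [hev.deriv_eq]
    have hder : ∀ (g : ℂ → ℂ), AnalyticOnNhd ℂ g U → ∀ j,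
        HasDerivAt (iteratedDeriv j g) (iteratedDeriv (j+1) g y) y := by
      intro g hg j
      have hd := ((an_iter hg j) y hy).differentiableAt.hasDerivAt
      rwa [← iteratedDeriv_succ] at hd
    have H : HasDerivAt (fun z => ∑ j ∈ Finset.range (n+1), (n.choose j : ℂ) *
        iteratedDeriv j u z * iteratedDeriv (n-j) v z)
        (∑ j ∈ Finset.range (n+1), (n.choose j : ℂ) *
          (iteratedDeriv (j+1) u y * iteratedDeriv (n-j) v y
            + iteratedDeriv j u y * iteratedDeriv ((n-j)+1) v y)) y := by
      apply HasDerivAt.fun_sum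
      intro j _
      have huj := hder u hu j
      have hvj := hder v hv (n - j)
      have := (huj.fun_mul hvj).const_mul ((n.choose j : ℂ))
      simpa only [← mul_assoc] using this
    rw [H.deriv]
    -- resummation
    have hsplit : ∀ j ∈ Finset.range (n+1), (n.choose j : ℂ) *
          (iteratedDeriv (j+1) u y * iteratedDeriv (n-j) v y
            + iteratedDeriv j u y * iteratedDeriv ((n-j)+1) v y)
        = (n.choose j : ℂ) * iteratedDeriv (j+1) u y * iteratedDeriv (n-j) v y
          + (n.choose j : ℂ) * iteratedDeriv j u y * iteratedDeriv (n+1-j) v y := by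
      intro j hj
      rw [Finset.mem_range, Nat.lt_succ_iff] at hj
      rw [show (n-j)+1 = n+1-j by omega]
      ring
    rw [Finset.sum_congr rfl hsplit, Finset.sum_add_distrib]
    have hpascal : ∀ j : ℕ, (((n+1).choose (j+1) : ℕ) : ℂ)
        = ((n.choose j : ℕ) : ℂ) + ((n.choose (j+1) : ℕ) : ℂ) := by
      intro j; rw [Nat.choose_succ_succ]; push_cast; ring
    rw [Finset.sum_range_succ' (fun j => (((n+1).choose j : ℕ) : ℂ) *
      iteratedDeriv j u y * iteratedDeriv (n+1-j) v y) (n+1)]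
    simp only [Nat.succ_sub_succ_eq_sub, Nat.choose_zero_right, Nat.cast_one, one_mul,
      Nat.sub_zero]
    have hexp : ∀ j ∈ Finset.range (n+1), (((n+1).choose (j+1) : ℕ) : ℂ) *
        iteratedDeriv (j+1) u y * iteratedDeriv (n-j) v y
        = ((n.choose j : ℕ) : ℂ) * iteratedDeriv (j+1) u y * iteratedDeriv (n-j) v y
          + ((n.choose (j+1) : ℕ) : ℂ) * iteratedDeriv (j+1) u y * iteratedDeriv (n-j) v y := by
      intro j _; rw [hpascal]; ring
    rw [Finset.sum_congr rfl hexp, Finset.sum_add_distrib]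
    have hBsplit : ∑ j ∈ Finset.range (n+1), ((n.choose j : ℕ) : ℂ) *
        iteratedDeriv j u y * iteratedDeriv (n+1-j) v y
        = (∑ j ∈ Finset.range n, ((n.choose (j+1) : ℕ) : ℂ) *
            iteratedDeriv (j+1) u y * iteratedDeriv (n-j) v y)
          + iteratedDeriv 0 u y * iteratedDeriv (n+1) v y := by
      rw [Finset.sum_range_succ' (fun j => ((n.choose j : ℕ) : ℂ) *
        iteratedDeriv j u y * iteratedDeriv (n+1-j) v y) n]
      simp [Nat.succ_sub_succ_eq_sub]
    have hAsplit : ∑ j ∈ Finset.range (n+1), ((n.choose (j+1) : ℕ) : ℂ) *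
        iteratedDeriv (j+1) u y * iteratedDeriv (n-j) v y
        = ∑ j ∈ Finset.range n, ((n.choose (j+1) : ℕ) : ℂ) *
            iteratedDeriv (j+1) u y * iteratedDeriv (n-j) v y := by
      rw [Finset.sum_range_succ]
      simp [Nat.choose_succ_self]
    rw [hBsplit, hAsplit]
    ring


lemma Lsum_eq (x y : ℂ) (n : ℕ) : Lsum x y n = (n.factorial : ℂ) * core (Sig x y) n := by
  rw [Lsum, core, Finset.mul_sum]
  exact Finset.sum_congr rfl fun p _ => mul_div_assoc _ _ _

lemma sig_one_eq (x : ℂ) : (fun z => Sig x z 1)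
    = fun z => (0 - z)⁻¹ + ((1:ℂ) - z)⁻¹ + (x - z)⁻¹ := by
  funext z; simp [Sig, zero_sub]

lemma sig_eq (x y : ℂ) (k : ℕ) :
    Sig x y k = ((0 - y) ^ k)⁻¹ + (((1:ℂ) - y) ^ k)⁻¹ + ((x - y) ^ k)⁻¹ := by
  simp [Sig, zero_sub]

lemma iter_div_const (g : ℂ → ℂ) (c : ℂ) :
    ∀ m, iteratedDeriv m (fun z => g z / c) = fun y => iteratedDeriv m g y / c := by
  intro m
  induction m with
  | zero => funext y; simp
  | succ m ih =>
    rw [iteratedDeriv_succ, ih, iteratedDeriv_succ]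
    funext y
    exact deriv_div_const _

/-- iterated derivative of `Sig x · 1 / 2`. -/
lemma sig_iter (x : ℂ) (j : ℕ) (y : ℂ) (h0 : y ≠ 0) (h1 : y ≠ 1) (hx : y ≠ x) :
    iteratedDeriv j (fun z => Sig x z 1 / 2) y = (j.factorial : ℂ) * Sig x y (j+1) / 2 := by
  rw [iter_div_const (fun z => Sig x z 1) 2 j, sig_one_eq]
  dsimp only
  rw [sig3_iter x j y h0 h1 hx, sig_eq]

lemma hasDerivAt_sig (x y0 : ℂ) (h : x - y0 ≠ 0) (k : ℕ) :
    HasDerivAt (fun t => Sig t y0 (k+1)) (-((k:ℂ)+1) * ((x - y0) ^ (k+2))⁻¹) x := by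
  have h1 : HasDerivAt (fun t : ℂ => t - y0) 1 x := (hasDerivAt_id x).sub_const y0
  have h2 : HasDerivAt (fun t : ℂ => (t - y0) ^ (k+1))
      (((k:ℂ)+1) * (x - y0) ^ k * 1) x := by simpa using h1.fun_pow (k+1)
  have h3 : HasDerivAt (fun t : ℂ => ((t - y0) ^ (k+1))⁻¹)
      (-(((k:ℂ)+1) * (x - y0) ^ k * 1) / ((x - y0) ^ (k+1)) ^ 2) x :=
    h2.inv (pow_ne_zero _ h)
  have h4 := (h3.const_add (((-y0) ^ (k+1))⁻¹ + (((1:ℂ) - y0) ^ (k+1))⁻¹))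
  have heq : (fun t : ℂ => ((-y0) ^ (k+1))⁻¹ + (((1:ℂ) - y0) ^ (k+1))⁻¹ + ((t - y0) ^ (k+1))⁻¹)
      = fun t => Sig t y0 (k+1) := by
    funext t; rw [Sig]
  rw [heq] at h4
  refine h4.congr_deriv ?_
  field_simp
  ring

lemma fderivSqrt_eq (x : ℂ) (U : Set ℂ) (hU : IsOpen U)
    (hUavoid : ∀ z ∈ U, z ≠ 0 ∧ z ≠ 1 ∧ z ≠ x)
    (f : ℂ → ℂ) (hf : DifferentiableOn ℂ f U)
    (hbranch : ∀ z ∈ U, (f z) ^ 2 * (z * (z - 1) * (z - x)) = 1) :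
    ∀ y ∈ U, deriv f y = Sig x y 1 / 2 * f y := by
  intro y hy
  obtain ⟨hy0, hy1, hyx⟩ := hUavoid y hy
  have hfy : f y ≠ 0 := by
    intro h
    have hb := hbranch y hy
    rw [h] at hb
    simp at hb
  have hy1' : y - 1 ≠ 0 := sub_ne_zero.2 hy1
  have hyx' : y - x ≠ 0 := sub_ne_zero.2 hyx
  have h1y : (1:ℂ) - y ≠ 0 := sub_ne_zero.2 (Ne.symm hy1)
  have hxy : x - y ≠ 0 := sub_ne_zero.2 (Ne.symm hyx)
  have hfd : HasDerivAt f (deriv f y) y :=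
    ((hf y hy).differentiableAt (hU.mem_nhds hy)).hasDerivAt
  have hgd : HasDerivAt (fun z : ℂ => z * (z - 1) * (z - x))
      ((1 * (y - 1) + y * 1) * (y - x) + y * (y - 1) * 1) y :=
    ((hasDerivAt_id y).mul ((hasDerivAt_id y).sub_const 1)).mul
      ((hasDerivAt_id y).sub_const x)
  have hF : HasDerivAt (fun z => f z ^ 2 * (z * (z - 1) * (z - x)))
      ((2 * f y ^ 1 * deriv f y) * (y * (y - 1) * (y - x))
        + f y ^ 2 * ((1 * (y - 1) + y * 1) * (y - x) + y * (y - 1) * 1)) y := by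
    have := (hfd.fun_pow 2).fun_mul hgd
    simpa using this
  have hconst : (fun z => f z ^ 2 * (z * (z - 1) * (z - x))) =ᶠ[nhds y] fun _ => 1 := by
    filter_upwards [hU.mem_nhds hy] with z hz
    exact hbranch z hz
  have hE : (2 * f y ^ 1 * deriv f y) * (y * (y - 1) * (y - x))
      + f y ^ 2 * ((1 * (y - 1) + y * 1) * (y - x) + y * (y - 1) * 1) = 0 := by
    rw [← hF.deriv, hconst.deriv_eq]
    simp
  have hid : Sig x y 1 * (y * (y - 1) * (y - x))
      + ((1 * (y - 1) + y * 1) * (y - x) + y * (y - 1) * 1) = 0 := by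
    rw [Sig]
    simp only [pow_one]
    field_simp [neg_ne_zero.2 hy0, h1y, hxy]
    ring
  have hcancel : (2 * f y * (y * (y - 1) * (y - x))) ≠ 0 :=
    mul_ne_zero (mul_ne_zero two_ne_zero hfy)
      (mul_ne_zero (mul_ne_zero hy0 hy1') hyx')
  apply mul_right_cancel₀ hcancel
  linear_combination hE - f y ^ 2 * hid

lemma derivF (x : ℂ) (U : Set ℂ) (hU : IsOpen U)
    (hUavoid : ∀ z ∈ U, z ≠ 0 ∧ z ≠ 1 ∧ z ≠ x)
    (f : ℂ → ℂ) (hf : DifferentiableOn ℂ f U)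
    (hbranch : ∀ z ∈ U, (f z) ^ 2 * (z * (z - 1) * (z - x)) = 1) :
    ∀ m, ∀ y ∈ U, iteratedDeriv m f y
      = f y * ((m.factorial : ℂ) * core (Sig x y) m) := by
  have hfa : AnalyticOnNhd ℂ f U := hf.analyticOnNhd hU
  have hSdiff : DifferentiableOn ℂ (fun z => Sig x z 1 / 2) U := by
    have e0 : DifferentiableOn ℂ (fun z : ℂ => (-z)⁻¹) U :=
      (differentiable_id.neg.differentiableOn).inv fun z hz =>
        neg_ne_zero.2 (hUavoid z hz).1
    have e1 : DifferentiableOn ℂ (fun z : ℂ => ((1:ℂ) - z)⁻¹) U :=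
      (((differentiable_const (1:ℂ)).sub differentiable_id).differentiableOn).inv fun z hz =>
        sub_ne_zero.2 (Ne.symm (hUavoid z hz).2.1)
    have e2 : DifferentiableOn ℂ (fun z : ℂ => (x - z)⁻¹) U :=
      (((differentiable_const x).sub differentiable_id).differentiableOn).inv fun z hz =>
        sub_ne_zero.2 (Ne.symm (hUavoid z hz).2.2)
    have h3 := ((e0.add e1).add e2).div_const (2:ℂ)
    refine h3.congr fun z _ => ?_
    simp [Sig]
  have hSa : AnalyticOnNhd ℂ (fun z => Sig x z 1 / 2) U := hSdiff.analyticOnNhd hU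
  intro m
  induction m using Nat.strong_induction_on with
  | _ m ih =>
    rcases m with _ | n
    · intro y hy
      simp [core_zero]
    · intro y hy
      obtain ⟨hy0, hy1, hyx⟩ := hUavoid y hy
      rw [iteratedDeriv_succ']
      have hev : deriv f =ᶠ[nhds y] fun z => Sig x z 1 / 2 * f z := by
        filter_upwards [hU.mem_nhds hy] with z hz
        exact fderivSqrt_eq x U hU hUavoid f hf hbranch z hz
      rw [hev.iteratedDeriv_eq]
      rw [leibniz hU hSa hfa n y hy]
      have hterm : ∀ j ∈ Finset.range (n+1), ((n.choose j : ℕ) : ℂ) *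
          iteratedDeriv j (fun z => Sig x z 1 / 2) y * iteratedDeriv (n-j) f y
          = f y * (n.factorial : ℂ) * (Sig x y (j+1) / 2 * core (Sig x y) (n - j)) := by
        intro j hj
        rw [Finset.mem_range, Nat.lt_succ_iff] at hj
        rw [sig_iter x j y hy0 hy1 hyx, ih (n - j) (by omega) y hy]
        have hc : ((n.choose j : ℕ):ℂ) * (j.factorial:ℂ) * ((n-j).factorial:ℂ)
            = (n.factorial:ℂ) := by
          exact_mod_cast congrArg (Nat.cast (R := ℂ))
            (Nat.choose_mul_factorial_mul_factorial hj)
        rw [← hc]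
        ring
      rw [Finset.sum_congr rfl hterm, ← Finset.mul_sum]
      have hrec := core_rec (Sig x y) (n+1)
      simp only [Nat.add_sub_cancel] at hrec
      rw [← hrec, Nat.factorial_succ]
      push_cast
      ring

/-- Lemma 4.2 (second form): for `n ≥ 1`,
`∂_x L_n = -(n/(2 f (x-y₀))) ∂_{y₀}^{n-1} (f/(x-y₀))`, with `y₀` held fixed in
the `x`-derivative. -/
theorem stmt7 (x : ℂ) (hx0 : x ≠ 0) (hx1 : x ≠ 1)
    (U : Set ℂ) (hU : IsOpen U)
    (hUavoid : ∀ z ∈ U, z ≠ 0 ∧ z ≠ 1 ∧ z ≠ x)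
    (f : ℂ → ℂ) (hf : DifferentiableOn ℂ f U)
    (hbranch : ∀ z ∈ U, (f z) ^ 2 * (z * (z - 1) * (z - x)) = 1)
    (y0 : ℂ) (hy : y0 ∈ U) (n : ℕ) (hn : 1 ≤ n) :
    deriv (fun t => Lsum t y0 n) x =
      -((n : ℂ) / (2 * f y0 * (x - y0))) *
        iteratedDeriv (n - 1) (fun y => f y / (x - y)) y0 := by
  obtain ⟨hy0, hy1, hyx⟩ := hUavoid y0 hy
  have hxy : x - y0 ≠ 0 := sub_ne_zero.2 (Ne.symm hyx)
  have hfy : f y0 ≠ 0 := by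
    intro h
    have hb := hbranch y0 hy
    rw [h] at hb
    simp at hb
  have hfa : AnalyticOnNhd ℂ f U := hf.analyticOnNhd hU
  have hva : AnalyticOnNhd ℂ (fun z : ℂ => (x - z)⁻¹) U :=
    ((((differentiable_const x).sub differentiable_id).differentiableOn).inv fun z hz =>
      sub_ne_zero.2 (Ne.symm (hUavoid z hz).2.2)).analyticOnNhd hU
  have hfun2 : (fun y => f y / (x - y)) = fun z => (x - z)⁻¹ * f z := by
    funext z; rw [div_eq_mul_inv, mul_comm]
  -- RHS
  have hRHS : iteratedDeriv (n-1) (fun y => f y / (x - y)) y0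
      = ∑ j ∈ Finset.range n, (((n-1).choose j : ℕ) : ℂ) *
          ((j.factorial : ℂ) * ((x - y0) ^ (j+1))⁻¹) *
          (f y0 * (((n-1-j).factorial : ℂ) * core (Sig x y0) (n-1-j))) := by
    rw [hfun2, leibniz hU hva hfa (n-1) y0 hy, show n - 1 + 1 = n by omega]
    refine Finset.sum_congr rfl fun j hj => ?_
    rw [iter_inv x j y0 hyx, derivF x U hU hUavoid f hf hbranch (n-1-j) y0 hy]
  -- LHS derivative
  have hosig : ∀ P : ℕ → ℕ, HasDerivAt (fun t => TT (Sig t y0) n P / DD n P)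
      ((∑ i ∈ Finset.range n, (∏ j ∈ (Finset.range n).erase i, Sig x y0 (j+1) ^ P j) *
        ((P i : ℂ) * Sig x y0 (i+1) ^ (P i - 1) * (-((i:ℂ)+1) * ((x - y0) ^ (i+2))⁻¹)))
        / DD n P) x := by
    intro P
    apply HasDerivAt.div_const
    have hprod := HasDerivAt.fun_finsetProd (u := Finset.range n)
      (f := fun i t => Sig t y0 (i+1) ^ P i)
      (f' := fun i => (P i : ℂ) * Sig x y0 (i+1) ^ (P i - 1)
        * (-((i:ℂ)+1) * ((x - y0) ^ (i+2))⁻¹))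
      (fun i _ => (hasDerivAt_sig x y0 hxy i).fun_pow (P i))
    have h2 : (fun t => TT (Sig t y0) n P)
        = fun t => ∏ i ∈ Finset.range n, Sig t y0 (i+1) ^ P i := rfl
    rw [h2]
    simpa [smul_eq_mul] using hprod
  have hLfun : (fun t => Lsum t y0 n)
      = fun t => (n.factorial : ℂ) * ∑ P ∈ Nset n, TT (Sig t y0) n P / DD n P := by
    funext t; rw [Lsum_eq, core_eq]
  have hL : HasDerivAt (fun t => Lsum t y0 n) ((n.factorial : ℂ) *
      ∑ P ∈ Nset n, (∑ i ∈ Finset.range n,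
        (∏ j ∈ (Finset.range n).erase i, Sig x y0 (j+1) ^ P j) *
        ((P i : ℂ) * Sig x y0 (i+1) ^ (P i - 1) * (-((i:ℂ)+1) * ((x - y0) ^ (i+2))⁻¹)))
        / DD n P) x := by
    rw [hLfun]
    exact (HasDerivAt.fun_sum fun P _ => hosig P).const_mul _
  rw [hL.deriv]
  -- massage into key form
  have hw : ∑ P ∈ Nset n, (∑ i ∈ Finset.range n,
        (∏ j ∈ (Finset.range n).erase i, Sig x y0 (j+1) ^ P j) *
        ((P i : ℂ) * Sig x y0 (i+1) ^ (P i - 1) * (-((i:ℂ)+1) * ((x - y0) ^ (i+2))⁻¹)))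
        / DD n P
      = ∑ P ∈ Nset n, ∑ i ∈ Finset.range n,
        (-((x - y0) ^ (i+2))⁻¹) * (P i : ℂ) * ((i:ℂ)+1) * Sig x y0 (i+1) ^ (P i - 1) *
          (∏ j ∈ (Finset.range n).erase i, Sig x y0 (j+1) ^ P j) / DD n P := by
    refine Finset.sum_congr rfl fun P _ => ?_
    rw [Finset.sum_div]
    refine Finset.sum_congr rfl fun i _ => ?_
    ring
  rw [hw, key (Sig x y0) (fun s => -((x - y0) ^ (s+2))⁻¹) n, hRHS]
  rw [Finset.mul_sum, Finset.mul_sum]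
  refine Finset.sum_congr rfl fun j hj => ?_
  rw [Finset.mem_range] at hj
  have hfac : (((n-1).choose j : ℕ) : ℂ) * (j.factorial : ℂ) * ((n-1-j).factorial : ℂ)
      = ((n-1).factorial : ℂ) := by
    exact_mod_cast congrArg (Nat.cast (R := ℂ))
      (Nat.choose_mul_factorial_mul_factorial (show j ≤ n - 1 by omega))
  have hfac2 : (n : ℂ) * ((n-1).factorial : ℂ) = (n.factorial : ℂ) := by
    exact_mod_cast congrArg (Nat.cast (R := ℂ)) (Nat.mul_factorial_pred (show n ≠ 0 by omega))
  rw [show (j:ℕ)+2 = (j+1)+1 from rfl, pow_succ, ← hfac2, ← hfac]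
  have hp : ((x - y0) ^ (j+1)) ≠ 0 := pow_ne_zero _ hxy
  field_simp
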